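/- Let P = (H, V, τ, A) be a span program on [q]^n, let α > 0, let x ∈ [q]^n have a negative witness with witness size w(P, x), and let Θ ∈ [0, π]. Then ‖P_Θ(U(P, x, α)) |0̂⟩‖ ≤ (Θ/2)·√(1 + α²·w(P, x)). -/

import Mathlib

noncomputable section

/-- A span program `P = (H, V, τ, A)` on `[q]^m`:
finite-dimensional complex inner product spaces `H` and `V`, an orthogonal
decomposition `H = H_1 ⊕ ⋯ ⊕ H_m ⊕ H_true ⊕ H_false`, subspaces
`H_{j,a} ⊆ H_j` with `Σ_a H_{j,a} = H_j`, a target `τ ∈ V` and `A : H → V`. -/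
structure SpanProgram (q m : ℕ) where
  H : Type
  V : Type
  [nH : NormedAddCommGroup H]
  [iH : InnerProductSpace ℂ H]
  [fH : FiniteDimensional ℂ H]
  [nV : NormedAddCommGroup V]
  [iV : InnerProductSpace ℂ V]
  [fV : FiniteDimensional ℂ V]
  Hj : Fin m → Submodule ℂ H
  Htrue : Submodule ℂ H
  Hfalse : Submodule ℂ H
  ortho : ∀ i i' : Fin m ⊕ Bool, i ≠ i' →
    (Sum.elim Hj (fun b => if b then Htrue else Hfalse) i).IsOrtho
      (Sum.elim Hj (fun b => if b then Htrue else Hfalse) i')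
  spans : (⨆ j, Hj j) ⊔ Htrue ⊔ Hfalse = ⊤
  Hja : Fin m → Fin q → Submodule ℂ H
  Hja_le : ∀ j a, Hja j a ≤ Hj j
  Hja_sup : ∀ j, (⨆ a, Hja j a) = Hj j
  tau : V
  A : H →ₗ[ℂ] V

attribute [instance] SpanProgram.nH SpanProgram.iH SpanProgram.fH
attribute [instance] SpanProgram.nV SpanProgram.iV SpanProgram.fV

namespace SpanProgram

variable {q m : ℕ} (P : SpanProgram q m)

/-- `H(x) = H_{1,x_1} ⊕ ⋯ ⊕ H_{m,x_m} ⊕ H_true`. -/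
def Hx (x : Fin m → Fin q) : Submodule ℂ P.H :=
  (⨆ j, P.Hja j (x j)) ⊔ P.Htrue

/-- `w` is a positive witness for `x`: `w ∈ H(x)` and `A w = τ`. -/
def PosWitness (x : Fin m → Fin q) (w : P.H) : Prop :=
  w ∈ P.Hx x ∧ P.A w = P.tau

/-- `ω` is a negative witness for `x`: `ω(τ) = 1` and `ω ∘ A ∘ Π_{H(x)} = 0`. -/
def NegWitness (x : Fin m → Fin q) (ω : P.V →ₗ[ℂ] ℂ) : Prop :=
  ω P.tau = 1 ∧ ∀ h ∈ P.Hx x, ω (P.A h) = 0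

def HasPos (x : Fin m → Fin q) : Prop := ∃ w, P.PosWitness x w

def HasNeg (x : Fin m → Fin q) : Prop := ∃ ω, P.NegWitness x ω

/-- positive witness size: `min{‖w‖² : w a positive witness for x}`. -/
def posSize (x : Fin m → Fin q) : ℝ :=
  sInf {r : ℝ | ∃ w, P.PosWitness x w ∧ r = ‖w‖ ^ 2}

/-- negative witness size: `min{‖ω∘A‖² : ω a negative witness for x}`, where
`‖ω∘A‖` is the norm of (the Riesz representative of) the functional `ω∘A`. -/
def negSize (x : Fin m → Fin q) : ℝ :=
  sInf {r : ℝ | ∃ ω, P.NegWitness x ω ∧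
    r = ‖LinearMap.toContinuousLinearMap (ω ∘ₗ P.A)‖ ^ 2}

open Classical in
/-- the witness size `w(P,x)`. -/
def witSize (x : Fin m → Fin q) : ℝ :=
  if P.HasPos x then P.posSize x else P.negSize x

/-- `P` decides `f` on `X`: every `x ∈ X` with `f x = 1` has a positive witness and
every `x ∈ X` with `f x = 0` has a negative witness. -/
def Decides (X : Set (Fin m → Fin q)) (f : (Fin m → Fin q) → Bool) : Prop :=
  ∀ x ∈ X, (f x = true → P.HasPos x) ∧ (f x = false → P.HasNeg x)

end SpanProgram


namespace SpanProgram

variable {q m : ℕ} (P : SpanProgram q m)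

/-- `H̃ = H ⊕ ℂ|0̂⟩` (with the `L²` direct-sum inner product). -/
def Htilde : Type := WithLp 2 (P.H × ℂ)

instance : NormedAddCommGroup P.Htilde :=
  inferInstanceAs (NormedAddCommGroup (WithLp 2 (P.H × ℂ)))
instance : InnerProductSpace ℂ P.Htilde :=
  inferInstanceAs (InnerProductSpace ℂ (WithLp 2 (P.H × ℂ)))
instance : FiniteDimensional ℂ P.Htilde :=
  inferInstanceAs (FiniteDimensional ℂ (WithLp 2 (P.H × ℂ)))

/-- the canonical linear identification of `H̃` with `H × ℂ`. -/
def tildeEquiv : P.Htilde ≃ₗ[ℂ] P.H × ℂ := WithLp.linearEquiv 2 ℂ (P.H × ℂ)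

/-- the unit vector `|0̂⟩ ∈ H̃`, orthogonal to `H`. -/
def zeroHat : P.Htilde := P.tildeEquiv.symm (0, 1)

/-- the isometric embedding of `H` into `H̃`. -/
def embed : P.H →ₗ[ℂ] P.Htilde :=
  P.tildeEquiv.symm.toLinearMap ∘ₗ LinearMap.inl ℂ P.H ℂ

/-- `A_α : H̃ → V`, with `A_α|0̂⟩ = τ/α` and `A_α = A` on `H`. -/
def Aalpha (α : ℝ) : P.Htilde →ₗ[ℂ] P.V :=
  (P.A.coprod (LinearMap.toSpanSingleton ℂ P.V (((α : ℂ))⁻¹ • P.tau))) ∘ₗ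
    P.tildeEquiv.toLinearMap

/-- `H̃(x) = H(x) ⊕ ℂ|0̂⟩`. -/
def HxTilde (x : Fin m → Fin q) : Submodule ℂ P.Htilde :=
  ((P.Hx x).prod (⊤ : Submodule ℂ ℂ)).comap P.tildeEquiv.toLinearMap

/-- orthogonal projection onto a submodule, as an endomorphism. -/
def projL (S : Submodule ℂ P.Htilde) : P.Htilde →ₗ[ℂ] P.Htilde :=
  S.subtype ∘ₗ (Submodule.orthogonalProjection S).toLinearMap

/-- `Λ_α`: the orthogonal projection of `H̃` onto `ker A_α`. -/
def Lambda (α : ℝ) : P.Htilde →ₗ[ℂ] P.Htilde :=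
  P.projL (LinearMap.ker (P.Aalpha α))

/-- `Π_x`: the orthogonal projection of `H̃` onto `H̃(x)`. -/
def Pix (x : Fin m → Fin q) : P.Htilde →ₗ[ℂ] P.Htilde :=
  P.projL (P.HxTilde x)

/-- `U(P, x, α) = (2Π_x − I)(2Λ_α − I)`. -/
def U (x : Fin m → Fin q) (α : ℝ) : P.Htilde →ₗ[ℂ] P.Htilde :=
  (2 • P.Pix x - LinearMap.id) ∘ₗ (2 • P.Lambda α - LinearMap.id)

end SpanProgram

/-- `phaseSpace U Θ` is the span of the eigenvectors of `U` with eigenvalue `e^{iθ}`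
for `|θ| ≤ Θ`; the orthogonal projection onto it is `P_Θ(U)`. -/
def phaseSpace {K : Type*} [NormedAddCommGroup K] [InnerProductSpace ℂ K]
    (U : K →ₗ[ℂ] K) (Θ : ℝ) : Submodule ℂ K :=
  ⨆ θ : Set.Icc (-Θ) Θ, Module.End.eigenspace U (Complex.exp (Complex.I * (θ : ℝ)))

section EffectiveGap

open Complex

local notation "⟪" x ", " y "⟫" => @inner ℂ _ _ x y

variable {K : Type*} [NormedAddCommGroup K] [InnerProductSpace ℂ K]

private lemma le_of_sq_le_sq'' {a b : ℝ} (ha : 0 ≤ a) (hb : 0 ≤ b) (h : a ^ 2 ≤ b ^ 2) :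
    a ≤ b := by nlinarith

private lemma my_sqrt_add_le (a b : ℝ) (ha : 0 ≤ a) (hb : 0 ≤ b) :
    Real.sqrt (a + b) ≤ Real.sqrt a + Real.sqrt b := by
  apply le_of_sq_le_sq'' (Real.sqrt_nonneg _) (by positivity)
  rw [Real.sq_sqrt (by linarith)]
  have h1 := Real.sq_sqrt ha
  have h2 := Real.sq_sqrt hb
  nlinarith [Real.sqrt_nonneg a, Real.sqrt_nonneg b]

private lemma proj_reflect_inner (S : Submodule ℂ K) [S.HasOrthogonalProjection] (v w : K) :
    ⟪2 • (Submodule.orthogonalProjection S v : K) - v, 2 • (Submodule.orthogonalProjection S w : K) - w⟫ = ⟪v, w⟫ := by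
  have hvq : ⟪v - (Submodule.orthogonalProjection S v : K), (Submodule.orthogonalProjection S w : K)⟫ = 0 :=
    Submodule.starProjection_inner_eq_zero v _ (SetLike.coe_mem _)
  have hpw : ⟪(Submodule.orthogonalProjection S v : K), w - (Submodule.orthogonalProjection S w : K)⟫ = 0 := by
    rw [inner_eq_zero_symm]
    exact Submodule.starProjection_inner_eq_zero w _ (SetLike.coe_mem _)
  set p := (Submodule.orthogonalProjection S v : K)
  set q := (Submodule.orthogonalProjection S w : K)
  rw [inner_sub_right] at hpw
  rw [inner_sub_left] at hvq
  rw [two_smul, two_smul]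
  simp only [inner_sub_left, inner_sub_right, inner_add_left, inner_add_right]
  have h1 : ⟪p, w⟫ = ⟪p, q⟫ := by linear_combination hpw
  have h2 : ⟪v, q⟫ = ⟪p, q⟫ := by linear_combination hvq
  rw [h1, h2]; ring

/-- norm-squared of a sum of pairwise orthogonal vectors -/
private lemma norm_sq_sum_orth {ι : Type*} (s : Finset ι) (v : ι → K)
    (h : ∀ i ∈ s, ∀ j ∈ s, i ≠ j → ⟪v i, v j⟫ = 0) :
    ‖∑ i ∈ s, v i‖ ^ 2 = ∑ i ∈ s, ‖v i‖ ^ 2 := by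
  have key : ⟪∑ i ∈ s, v i, ∑ j ∈ s, v j⟫ = ∑ i ∈ s, ⟪v i, v i⟫ := by
    rw [sum_inner]
    refine Finset.sum_congr rfl fun i hi => ?_
    rw [inner_sum]
    exact Finset.sum_eq_single_of_mem i hi fun j hj hne => h i hi j hj (Ne.symm hne)
  simp only [inner_self_eq_norm_sq_to_K] at key
  exact_mod_cast key

variable [FiniteDimensional ℂ K]

private lemma adjoint_comp_self_eq {U : K →ₗ[ℂ] K}
    (hU : ∀ v w : K, ⟪U v, U w⟫ = ⟪v, w⟫) (a : K) :
    LinearMap.adjoint U (U a) = a :=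
  ext_inner_right ℂ fun b => by rw [LinearMap.adjoint_inner_left, hU]

private lemma adjoint_eigen {U : K →ₗ[ℂ] K}
    (hU : ∀ v w : K, ⟪U v, U w⟫ = ⟪v, w⟫) {μ : ℂ} (hμ : μ ≠ 0) {v : K}
    (hv : v ∈ Module.End.eigenspace U μ) :
    LinearMap.adjoint U v = μ⁻¹ • v := by
  have h1 : U (μ⁻¹ • v) = v := by
    rw [map_smul, Module.End.mem_eigenspace_iff.mp hv, smul_smul,
      inv_mul_cancel₀ hμ, one_smul]
  conv_lhs => rw [← h1]
  exact adjoint_comp_self_eq hU _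

private lemma eigen_orth {U : K →ₗ[ℂ] K}
    (hU : ∀ v w : K, ⟪U v, U w⟫ = ⟪v, w⟫) {μ ν : ℂ} (hμ : μ * (starRingEnd ℂ) μ = 1)
    (hne : μ ≠ ν) {v w : K} (hv : v ∈ Module.End.eigenspace U μ)
    (hw : w ∈ Module.End.eigenspace U ν) : ⟪v, w⟫ = 0 := by
  have h1 : ⟪v, w⟫ = (starRingEnd ℂ) μ * ν * ⟪v, w⟫ := by
    conv_lhs => rw [← hU v w, Module.End.mem_eigenspace_iff.mp hv,
      Module.End.mem_eigenspace_iff.mp hw, inner_smul_left, inner_smul_right]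
    ring
  by_contra hc
  have h2 : (starRingEnd ℂ) μ * ν = 1 := by
    have h3 : ((starRingEnd ℂ) μ * ν - 1) * ⟪v, w⟫ = 0 := by linear_combination -h1
    rcases mul_eq_zero.mp h3 with h | h
    · exact sub_eq_zero.mp h
    · exact absurd h hc
  have hcμ : (starRingEnd ℂ) μ ≠ 0 := by
    intro h0; rw [h0, mul_zero] at hμ; exact one_ne_zero hμ.symm
  apply hne
  have := mul_left_cancel₀ hcμ (by linear_combination h2 - hμ : (starRingEnd ℂ) μ * ν = (starRingEnd ℂ) μ * μ)
  exact this.symm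

private lemma range_abs_one {Θ : ℝ} {μ : ℂ}
    (hμ : μ ∈ Set.range (fun θ : Set.Icc (-Θ) Θ => Complex.exp (Complex.I * (θ : ℝ)))) :
    μ * (starRingEnd ℂ) μ = 1 := by
  obtain ⟨θ, rfl⟩ := hμ
  show Complex.exp (Complex.I * (θ : ℝ)) * (starRingEnd ℂ) (Complex.exp (Complex.I * (θ : ℝ))) = 1
  rw [Complex.mul_conj, Complex.normSq_eq_norm_sq, mul_comm Complex.I]
  rw [Complex.norm_exp_ofReal_mul_I]
  norm_num

private lemma range_close {Θ : ℝ} (hΘ : 0 ≤ Θ) {μ : ℂ}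
    (hμ : μ ∈ Set.range (fun θ : Set.Icc (-Θ) Θ => Complex.exp (Complex.I * (θ : ℝ)))) :
    ‖1 - μ‖ ≤ Θ := by
  obtain ⟨θ, rfl⟩ := hμ
  show ‖1 - Complex.exp (Complex.I * (θ : ℝ))‖ ≤ Θ
  have hre : (Complex.exp (Complex.I * (θ : ℝ))).re = Real.cos θ := by
    rw [mul_comm]; exact Complex.exp_ofReal_mul_I_re θ
  have him : (Complex.exp (Complex.I * (θ : ℝ))).im = Real.sin θ := by
    rw [mul_comm]; exact Complex.exp_ofReal_mul_I_im θ
  apply le_of_sq_le_sq'' (norm_nonneg _) hΘ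
  rw [Complex.sq_norm, Complex.normSq_apply]
  simp only [Complex.sub_re, Complex.sub_im, Complex.one_re, Complex.one_im, hre, him]
  have hc := Real.one_sub_sq_div_two_le_cos (x := (θ : ℝ))
  have hs := Real.sin_sq_add_cos_sq (θ : ℝ)
  have h1 : -Θ ≤ (θ : ℝ) := θ.2.1
  have h2 : (θ : ℝ) ≤ Θ := θ.2.2
  nlinarith

private lemma phase_mem_bound {U : K →ₗ[ℂ] K}
    (hU : ∀ v w : K, ⟪U v, U w⟫ = ⟪v, w⟫) {Θ : ℝ} (hΘ : 0 ≤ Θ) {qv : K}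
    (hq : qv ∈ phaseSpace U Θ) :
    ‖qv - LinearMap.adjoint U qv‖ ≤ Θ * ‖qv‖ := by
  classical
  set g : Set.Icc (-Θ) Θ → ℂ := fun θ => Complex.exp (Complex.I * (θ : ℝ)) with hg
  have hqr : qv ∈ ⨆ μ : Set.range g, Module.End.eigenspace U (μ : ℂ) := by
    rw [iSup_range' (fun μ => Module.End.eigenspace U μ) g]
    exact hq
  rw [Submodule.mem_iSup_iff_exists_finsupp] at hqr
  obtain ⟨f, hf, hsum⟩ := hqr
  have hqe : qv = ∑ μ ∈ f.support, f μ := by rw [← hsum]; rfl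
  have hμ0 : ∀ μ : Set.range g, (μ : ℂ) ≠ 0 := by
    rintro ⟨μ, θ, rfl⟩
    exact Complex.exp_ne_zero _
  -- the vector T (f μ)
  set T : K →ₗ[ℂ] K := LinearMap.id - LinearMap.adjoint U with hT
  have hTf : ∀ μ : Set.range g, T (f μ) = (1 - (μ : ℂ)⁻¹) • f μ := by
    intro μ
    rw [hT, LinearMap.sub_apply, LinearMap.id_apply,
      adjoint_eigen hU (hμ0 μ) (hf μ), sub_smul, one_smul]
  have hTmem : ∀ μ : Set.range g, T (f μ) ∈ Module.End.eigenspace U (μ : ℂ) := by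
    intro μ; rw [hTf]; exact Submodule.smul_mem _ _ (hf μ)
  have horth : ∀ μ ∈ f.support, ∀ ν ∈ f.support, μ ≠ ν → ⟪T (f μ), T (f ν)⟫ = 0 := by
    intro μ _ ν _ hne
    exact eigen_orth hU (range_abs_one μ.2) (fun h => hne (Subtype.ext h)) (hTmem μ) (hTmem ν)
  have horth' : ∀ μ ∈ f.support, ∀ ν ∈ f.support, μ ≠ ν → ⟪f μ, f ν⟫ = 0 := by
    intro μ _ ν _ hne
    exact eigen_orth hU (range_abs_one μ.2) (fun h => hne (Subtype.ext h)) (hf μ) (hf ν)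
  have hTsum : T qv = ∑ μ ∈ f.support, T (f μ) := by rw [hqe, map_sum]
  have hnorm1 : ‖T qv‖ ^ 2 = ∑ μ ∈ f.support, ‖T (f μ)‖ ^ 2 := by
    rw [hTsum]; exact norm_sq_sum_orth _ _ horth
  have hnorm2 : ‖qv‖ ^ 2 = ∑ μ ∈ f.support, ‖f μ‖ ^ 2 := by
    rw [hqe]; exact norm_sq_sum_orth _ _ horth'
  have hterm : ∀ μ ∈ f.support, ‖T (f μ)‖ ^ 2 ≤ Θ ^ 2 * ‖f μ‖ ^ 2 := by
    intro μ _
    rw [hTf, norm_smul]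
    have habs : ‖1 - (μ : ℂ)⁻¹‖ ≤ Θ := by
      have hinv : (μ : ℂ)⁻¹ = (starRingEnd ℂ) (μ : ℂ) :=
        inv_eq_of_mul_eq_one_right (range_abs_one μ.2)
      rw [hinv, show (1 : ℂ) - (starRingEnd ℂ) (μ : ℂ) = (starRingEnd ℂ) (1 - (μ : ℂ)) by
        rw [map_sub, map_one]]
      rw [Complex.norm_conj]
      exact range_close hΘ μ.2
    have h1 : (0 : ℝ) ≤ ‖f μ‖ := norm_nonneg _
    have h2 : (0 : ℝ) ≤ ‖1 - (μ : ℂ)⁻¹‖ := norm_nonneg _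
    have h3 : ‖1 - (μ : ℂ)⁻¹‖ * ‖f μ‖ ≤ Θ * ‖f μ‖ :=
      mul_le_mul_of_nonneg_right habs h1
    nlinarith [mul_nonneg h2 h1]
  have hfin : ‖T qv‖ ^ 2 ≤ Θ ^ 2 * ‖qv‖ ^ 2 := by
    rw [hnorm1, hnorm2, Finset.mul_sum]
    exact Finset.sum_le_sum hterm
  have : T qv = qv - LinearMap.adjoint U qv := by rw [hT]; rfl
  rw [← this]
  apply le_of_sq_le_sq'' (norm_nonneg _) (by positivity)
  calc ‖T qv‖ ^ 2 ≤ Θ ^ 2 * ‖qv‖ ^ 2 := hfin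
    _ = (Θ * ‖qv‖) ^ 2 := by ring

private lemma phase_proj_bound {U : K →ₗ[ℂ] K}
    (hU : ∀ v w : K, ⟪U v, U w⟫ = ⟪v, w⟫) {Θ : ℝ} (hΘ : 0 ≤ Θ) (u : K) :
    ‖(Submodule.orthogonalProjection (phaseSpace U Θ) (u - U u) : K)‖ ≤ Θ * ‖u‖ := by
  set S := phaseSpace U Θ
  set qv : K := (Submodule.orthogonalProjection S (u - U u) : K) with hqv
  have hqmem : qv ∈ S := SetLike.coe_mem _
  have hperp : ⟪qv, (u - U u) - qv⟫ = 0 :=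
    (Submodule.mem_orthogonal S _).mp (Submodule.sub_starProjection_mem_orthogonal _) qv hqmem
  have h2 : ⟪qv, u - U u⟫ = (‖qv‖ : ℂ) ^ 2 := by
    rw [inner_sub_right] at hperp
    have hself : ⟪qv, qv⟫ = (‖qv‖ : ℂ) ^ 2 := inner_self_eq_norm_sq_to_K qv
    linear_combination hperp + hself
  have hsq : (‖qv‖ : ℂ) ^ 2 = ⟪qv - LinearMap.adjoint U qv, u⟫ := by
    rw [inner_sub_left, ← h2, inner_sub_right, LinearMap.adjoint_inner_left]
  have hb : ‖qv‖ ^ 2 ≤ (Θ * ‖qv‖) * ‖u‖ := by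
    have h3 : ‖qv‖ ^ 2 = ‖⟪qv - LinearMap.adjoint U qv, u⟫‖ := by
      rw [← hsq]
      rw [show ((‖qv‖ : ℂ)) ^ 2 = ((‖qv‖ ^ 2 : ℝ) : ℂ) by push_cast; ring]
      rw [Complex.norm_real]
      exact (Real.norm_of_nonneg (by positivity)).symm
    rw [h3]
    calc ‖⟪qv - LinearMap.adjoint U qv, u⟫‖ ≤ ‖qv - LinearMap.adjoint U qv‖ * ‖u‖ :=
          norm_inner_le_norm _ _
      _ ≤ (Θ * ‖qv‖) * ‖u‖ :=
          mul_le_mul_of_nonneg_right (phase_mem_bound hU hΘ hqmem) (norm_nonneg _)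
  rcases eq_or_lt_of_le (norm_nonneg qv) with h0 | h0
  · rw [← h0]; positivity
  · nlinarith


set_option maxHeartbeats 2000000 in
/-- if `x` has a negative witness with witness size `w(P,x)` and
`Θ ∈ [0,π]`, then `‖P_Θ(U(P,x,α))|0̂⟩‖ ≤ (Θ/2)·√(1 + α²·w(P,x))`. -/
theorem negative_case_phase_bound {q n : ℕ} (hq : 2 ≤ q) (hn : 1 ≤ n)
    (P : SpanProgram q n) (x : Fin n → Fin q) (hx : P.HasNeg x)
    (α : ℝ) (hα : 0 < α) (Θ : ℝ) (hΘ : Θ ∈ Set.Icc (0 : ℝ) Real.pi) :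
    ‖P.projL (phaseSpace (P.U x α) Θ) P.zeroHat‖ ≤
      (Θ / 2) * Real.sqrt (1 + α ^ 2 * P.negSize x) := by
  classical
  have hΘ0 : 0 ≤ Θ := hΘ.1
  set S := phaseSpace (P.U x α) Θ with hSdef
  -- generic facts on H̃
  have hinner_ht : ∀ a b : P.Htilde, ⟪a, b⟫ =
      ⟪(P.tildeEquiv a).1, (P.tildeEquiv b).1⟫ +
        (starRingEnd ℂ) (P.tildeEquiv a).2 * (P.tildeEquiv b).2 := fun a b => by rw [← RCLike.inner_apply']; rfl
  have hnorm_ht : ∀ a : P.Htilde,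
      ‖a‖ ^ 2 = ‖(P.tildeEquiv a).1‖ ^ 2 + ‖(P.tildeEquiv a).2‖ ^ 2 := fun a =>
    WithLp.prod_norm_sq_eq_of_L2 a
  have hAal : ∀ a : P.Htilde, P.Aalpha α a =
      P.A (P.tildeEquiv a).1 + (P.tildeEquiv a).2 • (((α : ℂ))⁻¹ • P.tau) := fun a => rfl
  -- U preserves inner products
  have hrefl : ∀ (Sm : Submodule ℂ P.Htilde) (v w : P.Htilde),
      ⟪(2 • P.projL Sm - LinearMap.id : P.Htilde →ₗ[ℂ] P.Htilde) v,
        (2 • P.projL Sm - LinearMap.id : P.Htilde →ₗ[ℂ] P.Htilde) w⟫ = ⟪v, w⟫ := by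
    intro Sm v w
    have h := proj_reflect_inner Sm v w
    simpa [SpanProgram.projL, LinearMap.sub_apply, LinearMap.smul_apply] using h
  have hU : ∀ v w : P.Htilde, ⟪P.U x α v, P.U x α w⟫ = ⟪v, w⟫ := by
    intro v w
    show ⟪(2 • P.Pix x - LinearMap.id : P.Htilde →ₗ[ℂ] P.Htilde)
        ((2 • P.Lambda α - LinearMap.id : P.Htilde →ₗ[ℂ] P.Htilde) v),
      (2 • P.Pix x - LinearMap.id : P.Htilde →ₗ[ℂ] P.Htilde)
        ((2 • P.Lambda α - LinearMap.id : P.Htilde →ₗ[ℂ] P.Htilde) w)⟫ = ⟪v, w⟫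
    rw [show P.Pix x = P.projL (P.HxTilde x) from rfl,
      show P.Lambda α = P.projL (LinearMap.ker (P.Aalpha α)) from rfl, hrefl, hrefl]
  have htz : P.tildeEquiv P.zeroHat = (0, 1) := P.tildeEquiv.apply_symm_apply _
  -- the per-witness bound
  have key : ∀ r ∈ {r : ℝ | ∃ ω, P.NegWitness x ω ∧
      r = ‖LinearMap.toContinuousLinearMap (ω ∘ₗ P.A)‖ ^ 2},
      ‖P.projL S P.zeroHat‖ ≤ (Θ / 2) * Real.sqrt (1 + α ^ 2 * r) := by
    rintro r ⟨ω, hω, rfl⟩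
    set N := ‖LinearMap.toContinuousLinearMap (ω ∘ₗ P.A)‖ with hN
    set rv : P.H := (InnerProductSpace.toDual ℂ P.H).symm
      (LinearMap.toContinuousLinearMap (ω ∘ₗ P.A)) with hrv
    set u : P.Htilde := P.tildeEquiv.symm ((α : ℂ) • rv, 1) with hu
    have htu : P.tildeEquiv u = ((α : ℂ) • rv, 1) := P.tildeEquiv.apply_symm_apply _
    have hrv_inner : ∀ h1 : P.H, ⟪rv, h1⟫ = ω (P.A h1) := by
      intro h1
      rw [hrv, InnerProductSpace.toDual_symm_apply]
      rfl
    have hinner : ∀ h : P.Htilde,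
        ⟪u, h⟫ = (α : ℂ) * ω (P.A (P.tildeEquiv h).1) + (P.tildeEquiv h).2 := by
      intro h
      rw [hinner_ht u h, htu]
      simp only [map_one, one_mul]
      rw [inner_smul_left, Complex.conj_ofReal, hrv_inner]
    have hαC : (α : ℂ) ≠ 0 := by exact_mod_cast hα.ne'
    -- u ⟂ ker Aα
    have hker : u ∈ (LinearMap.ker (P.Aalpha α))ᗮ := by
      rw [Submodule.mem_orthogonal]
      intro h hh
      have hA' : P.A (P.tildeEquiv h).1 + (P.tildeEquiv h).2 • (((α : ℂ))⁻¹ • P.tau) = 0 := by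
        rw [← hAal]; exact hh
      have hω0 : ω (P.A (P.tildeEquiv h).1) + (P.tildeEquiv h).2 * (α : ℂ)⁻¹ = 0 := by
        have h0 := congrArg ω hA'
        simpa [map_add, map_smul, smul_eq_mul, hω.1, mul_comm] using h0
      have hz0 : ⟪u, h⟫ = 0 := by
        rw [hinner]
        have hαinv : (α : ℂ) * (α : ℂ)⁻¹ = 1 := mul_inv_cancel₀ hαC
        linear_combination (α : ℂ) * hω0 - (P.tildeEquiv h).2 * hαinv
      rw [← inner_conj_symm, hz0, map_zero]
    have hLam : P.Lambda α u = 0 := by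
      show ((Submodule.orthogonalProjection (LinearMap.ker (P.Aalpha α)) u : P.Htilde)) = 0
      rw [Submodule.orthogonalProjectionOnto_apply_of_mem_orthogonal hker]
      rfl
    -- Pix u = zeroHat
    have hzmem : P.zeroHat ∈ P.HxTilde x := by
      show P.tildeEquiv P.zeroHat ∈ (P.Hx x).prod ⊤
      rw [htz]
      exact ⟨Submodule.zero_mem _, trivial⟩
    have hPix : P.Pix x u = P.zeroHat := by
      show ((Submodule.orthogonalProjection (P.HxTilde x) u : P.Htilde)) = P.zeroHat
      refine Submodule.eq_starProjection_of_mem_of_inner_eq_zero (K := P.HxTilde x) (u := u) hzmem ?_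
      intro w hw
      have hw1 : (P.tildeEquiv w).1 ∈ P.Hx x := by
        have hmem : P.tildeEquiv w ∈ (P.Hx x).prod ⊤ := hw
        exact hmem.1
      have hzw : ⟪P.zeroHat, w⟫ = (P.tildeEquiv w).2 := by
        rw [hinner_ht P.zeroHat w, htz]
        simp
      rw [inner_sub_left, hinner, hzw, hω.2 _ hw1]
      ring
    -- U u
    have hUu : P.U x α u = u - (2 : ℂ) • P.zeroHat := by
      have h1 : (2 • P.Lambda α - LinearMap.id : P.Htilde →ₗ[ℂ] P.Htilde) u = -u := by
        rw [LinearMap.sub_apply, LinearMap.smul_apply, hLam, LinearMap.id_apply]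
        simp
      show (2 • P.Pix x - LinearMap.id : P.Htilde →ₗ[ℂ] P.Htilde)
        ((2 • P.Lambda α - LinearMap.id : P.Htilde →ₗ[ℂ] P.Htilde) u) = _
      rw [h1, LinearMap.sub_apply, LinearMap.smul_apply, LinearMap.id_apply, map_neg, hPix]
      have h2 : (2 : ℕ) • P.zeroHat = (2 : ℂ) • P.zeroHat := by
        rw [show ((2 : ℂ)) = ((2 : ℕ) : ℂ) by norm_num, Nat.cast_smul_eq_nsmul]
      rw [smul_neg, h2]
      abel
    have hsub : u - P.U x α u = (2 : ℂ) • P.zeroHat := by rw [hUu]; abel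
    have hproj2 : (Submodule.orthogonalProjection S (u - P.U x α u) : P.Htilde) =
        (2 : ℂ) • (Submodule.orthogonalProjection S P.zeroHat : P.Htilde) := by
      rw [hsub, map_smul, Submodule.coe_smul]
    -- ‖u‖
    have hrvn : ‖rv‖ = N := by rw [hrv]; exact LinearIsometryEquiv.norm_map _ _
    have hnormu : ‖u‖ ^ 2 = 1 + α ^ 2 * N ^ 2 := by
      rw [hnorm_ht u, htu]
      show ‖(α : ℂ) • rv‖ ^ 2 + ‖(1 : ℂ)‖ ^ 2 = _
      rw [norm_smul, hrvn, Complex.norm_real, norm_one]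
      rw [Real.norm_eq_abs, abs_of_pos hα]
      ring
    have hun : ‖u‖ = Real.sqrt (1 + α ^ 2 * N ^ 2) := by
      rw [← hnormu, Real.sqrt_sq (norm_nonneg _)]
    -- main inequality
    have hmain := phase_proj_bound hU hΘ0 u
    rw [hproj2] at hmain
    rw [norm_smul] at hmain
    have h2n : ‖(2 : ℂ)‖ = 2 := by norm_num
    rw [h2n] at hmain
    have hL : ‖P.projL S P.zeroHat‖ = ‖(Submodule.orthogonalProjection S P.zeroHat : P.Htilde)‖ := rfl
    rw [hL]
    rw [hun] at hmain
    linarith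
  -- pass to the infimum
  have hne : {r : ℝ | ∃ ω, P.NegWitness x ω ∧
      r = ‖LinearMap.toContinuousLinearMap (ω ∘ₗ P.A)‖ ^ 2}.Nonempty := by
    obtain ⟨ω, hω⟩ := hx
    exact ⟨_, ω, hω, rfl⟩
  have hnonneg : ∀ r ∈ {r : ℝ | ∃ ω, P.NegWitness x ω ∧
      r = ‖LinearMap.toContinuousLinearMap (ω ∘ₗ P.A)‖ ^ 2}, 0 ≤ r := by
    rintro r ⟨ω, _, rfl⟩
    positivity
  have hs0 : 0 ≤ P.negSize x := Real.sInf_nonneg hnonneg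
  rw [show P.negSize x = sInf {r : ℝ | ∃ ω, P.NegWitness x ω ∧
      r = ‖LinearMap.toContinuousLinearMap (ω ∘ₗ P.A)‖ ^ 2} from rfl] at hs0 ⊢
  set s := sInf {r : ℝ | ∃ ω, P.NegWitness x ω ∧
      r = ‖LinearMap.toContinuousLinearMap (ω ∘ₗ P.A)‖ ^ 2} with hsdef
  apply le_of_forall_pos_le_add
  intro ε hε
  set c := Θ / 2 * α + 1 with hc
  have hc0 : 0 < c := by positivity
  have hδ0 : 0 < (ε / c) ^ 2 := by positivity
  obtain ⟨r, hr, hrlt⟩ := Real.lt_sInf_add_pos hne hδ0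
  have h1 := key r hr
  have hr0 := hnonneg r hr
  have h2 : Real.sqrt (1 + α ^ 2 * r) ≤
      Real.sqrt (1 + α ^ 2 * s) + Real.sqrt (α ^ 2 * (ε / c) ^ 2) := by
    calc Real.sqrt (1 + α ^ 2 * r)
        ≤ Real.sqrt ((1 + α ^ 2 * s) + α ^ 2 * (ε / c) ^ 2) := by
          apply Real.sqrt_le_sqrt
          rw [← hsdef] at hrlt
          nlinarith
      _ ≤ _ := my_sqrt_add_le _ _ (by nlinarith) (by positivity)
  have h3 : Real.sqrt (α ^ 2 * (ε / c) ^ 2) = α * (ε / c) := by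
    rw [show α ^ 2 * (ε / c) ^ 2 = (α * (ε / c)) ^ 2 by ring,
      Real.sqrt_sq (by positivity)]
  have h4 : Θ / 2 * (α * (ε / c)) ≤ ε := by
    have hle : Θ / 2 * α ≤ c := by rw [hc]; linarith
    have he : 0 ≤ ε / c := by positivity
    calc Θ / 2 * (α * (ε / c)) = (Θ / 2 * α) * (ε / c) := by ring
      _ ≤ c * (ε / c) := mul_le_mul_of_nonneg_right hle he
      _ = ε := by field_simp
  calc ‖P.projL S P.zeroHat‖ ≤ Θ / 2 * Real.sqrt (1 + α ^ 2 * r) := h1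
    _ ≤ Θ / 2 * (Real.sqrt (1 + α ^ 2 * s) + α * (ε / c)) := by
        rw [← h3]
        exact mul_le_mul_of_nonneg_left h2 (by linarith)
    _ = Θ / 2 * Real.sqrt (1 + α ^ 2 * s) + Θ / 2 * (α * (ε / c)) := by ring
    _ ≤ Θ / 2 * Real.sqrt (1 + α ^ 2 * s) + ε := by linarith [h4]

end EffectiveGap
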